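/- Suppose there exists an index i such that 2λ_i + j ≠ 0 for every j ∈ {0, 1, …, k−1}. Then the linear map T : ℝ^{{α∈ℕⁿ : |α|=k}} → ℝ^{{β∈ℕⁿ : |β|=k−1}} defined by (T D)_β = Σ_{i=1}^n (β_i + 1)(β_i + 2λ_i) D_{β^i} is surjective; equivalently, the rank of T equals N_{k−1}. -/

import Mathlib

open scoped BigOperators

noncomputable section

/-- For `|β| = k − 1`, the multi-index `β^i` (the `i`-th entry increased by `1`) has
`|β^i| = k`. -/
def upIdx (n k : ℕ) (hk : 1 ≤ k) (β : {β : Fin n → ℕ // ∑ i, β i = k - 1}) (i : Fin n) :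
    {α : Fin n → ℕ // ∑ i, α i = k} :=
  ⟨Function.update β.1 i (β.1 i + 1), by
    have h1 : ∑ j, Function.update β.1 i (β.1 i + 1) j
        = (β.1 i + 1) + ∑ j ∈ Finset.univ.erase i, β.1 j := by
      rw [← Finset.add_sum_erase _ _ (Finset.mem_univ i), Function.update_self]
      congr 1
      exact Finset.sum_congr rfl fun j hj =>
        Function.update_of_ne (Finset.mem_erase.1 hj).1 _ _
    have h2 : β.1 i + ∑ j ∈ Finset.univ.erase i, β.1 j = k - 1 := by
      rw [Finset.add_sum_erase _ _ (Finset.mem_univ i)]; exact β.2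
    omega⟩

/-- The linear map `T : ℝ^{{|α|=k}} → ℝ^{{|β|=k−1}}`,
`(T D)_β = Σᵢ (βᵢ+1)(βᵢ+2λᵢ) D_{βⁱ}`. -/
def Tmap (n k : ℕ) (hk : 1 ≤ k) (lam : Fin n → ℝ) :
    ({α : Fin n → ℕ // ∑ i, α i = k} → ℝ) →ₗ[ℝ]
      ({β : Fin n → ℕ // ∑ i, β i = k - 1} → ℝ) where
  toFun D := fun β => ∑ i, ((β.1 i : ℝ) + 1) * ((β.1 i : ℝ) + 2 * lam i)
    * D (upIdx n k hk β i)
  map_add' D E := by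
    funext β
    simp only [Pi.add_apply, mul_add]
    rw [Finset.sum_add_distrib]
  map_smul' r D := by
    funext β
    simp only [Pi.smul_apply, smul_eq_mul, RingHom.id_apply]
    rw [Finset.mul_sum]
    exact Finset.sum_congr rfl fun i _ => by ring

/-- `β^i` with the `i`-th entry decreased by one. -/
def downIdx (n k : ℕ) (hk : 1 ≤ k) (α : {α : Fin n → ℕ // ∑ i, α i = k}) (i : Fin n)
    (h : α.1 i ≠ 0) : {β : Fin n → ℕ // ∑ i, β i = k - 1} :=
  ⟨Function.update α.1 i (α.1 i - 1), by
    have h1 : ∑ j, Function.update α.1 i (α.1 i - 1) j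
        = (α.1 i - 1) + ∑ j ∈ Finset.univ.erase i, α.1 j := by
      rw [← Finset.add_sum_erase _ _ (Finset.mem_univ i), Function.update_self]
      congr 1
      exact Finset.sum_congr rfl fun j hj =>
        Function.update_of_ne (Finset.mem_erase.1 hj).1 _ _
    have h2 : α.1 i + ∑ j ∈ Finset.univ.erase i, α.1 j = k := by
      rw [Finset.add_sum_erase _ _ (Finset.mem_univ i)]; exact α.2
    omega⟩

/-- Iterative construction of a preimage. -/
def Fseq (n k : ℕ) (hk : 1 ≤ k) (lam : Fin n → ℝ) (i : Fin n)
    (E : {β : Fin n → ℕ // ∑ i, β i = k - 1} → ℝ) :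
    ℕ → {α : Fin n → ℕ // ∑ i, α i = k} → ℝ
  | 0 => fun _ => 0
  | (m + 1) => fun α =>
    if hα : α.1 i = m + 1 then
      (E (downIdx n k hk α i (by omega)) - ∑ j ∈ Finset.univ.erase i,
          (((downIdx n k hk α i (by omega)).1 j : ℝ) + 1)
            * (((downIdx n k hk α i (by omega)).1 j : ℝ) + 2 * lam j)
            * Fseq n k hk lam i E m (upIdx n k hk (downIdx n k hk α i (by omega)) j))
        / ((((downIdx n k hk α i (by omega)).1 i : ℝ) + 1)
            * (((downIdx n k hk α i (by omega)).1 i : ℝ) + 2 * lam i))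
    else Fseq n k hk lam i E m α

lemma Fseq_stable (n k : ℕ) (hk : 1 ≤ k) (lam : Fin n → ℝ) (i : Fin n)
    (E : {β : Fin n → ℕ // ∑ i, β i = k - 1} → ℝ) :
    ∀ m (α : {α : Fin n → ℕ // ∑ i, α i = k}), α.1 i ≤ m →
      Fseq n k hk lam i E m α = Fseq n k hk lam i E (α.1 i) α := by
  intro m
  induction m with
  | zero => intro α hα; rw [Nat.le_zero.1 hα]
  | succ m ih =>
    intro α hα
    by_cases h : α.1 i = m + 1
    · rw [h]
    · have : α.1 i ≤ m := by omega
      simp only [Fseq]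
      rw [dif_neg h]
      exact ih α this

/-- if some `λᵢ` satisfies `2λᵢ + j ≠ 0` for every `j ∈ {0,…,k−1}`,
then `T` is surjective (equivalently, its rank is `N_{k−1}`). -/
theorem Tmap_surjective (n k : ℕ) (hn : 1 ≤ n) (hk : 1 ≤ k) (lam : Fin n → ℝ)
    (hlam : ∃ i : Fin n, ∀ j : ℕ, j < k → 2 * lam i + (j : ℝ) ≠ 0) :
    Function.Surjective (Tmap n k hk lam) := by
  obtain ⟨i, hi⟩ := hlam
  intro E
  refine ⟨fun α => Fseq n k hk lam i E (α.1 i) α, ?_⟩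
  funext β
  have hβi : β.1 i < k := by
    have := Finset.single_le_sum (f := β.1) (fun j _ => Nat.zero_le _) (Finset.mem_univ i)
    rw [β.2] at this; omega
  have hne : ((β.1 i : ℝ) + 1) * ((β.1 i : ℝ) + 2 * lam i) ≠ 0 := by
    apply mul_ne_zero
    · positivity
    · have := hi (β.1 i) hβi
      intro h; apply this; linarith
  have hupi : (upIdx n k hk β i).1 i = β.1 i + 1 := Function.update_self _ _ _
  have hupj : ∀ j : Fin n, j ≠ i → (upIdx n k hk β j).1 i = β.1 i := by
    intro j hj
    exact Function.update_of_ne (Ne.symm hj) _ _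
  have hdown : ∀ h, downIdx n k hk (upIdx n k hk β i) i h = β := by
    intro h
    apply Subtype.ext
    show Function.update (Function.update β.1 i (β.1 i + 1)) i
        (Function.update β.1 i (β.1 i + 1) i - 1) = β.1
    rw [Function.update_self, Function.update_idem, Nat.add_sub_cancel,
      Function.update_eq_self]
  show ∑ j, ((β.1 j : ℝ) + 1) * ((β.1 j : ℝ) + 2 * lam j)
      * Fseq n k hk lam i E ((upIdx n k hk β j).1 i) (upIdx n k hk β j) = E β
  rw [← Finset.add_sum_erase _ _ (Finset.mem_univ i)]
  have hS : ∑ j ∈ Finset.univ.erase i, ((β.1 j : ℝ) + 1) * ((β.1 j : ℝ) + 2 * lam j)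
      * Fseq n k hk lam i E ((upIdx n k hk β j).1 i) (upIdx n k hk β j)
      = ∑ j ∈ Finset.univ.erase i, ((β.1 j : ℝ) + 1) * ((β.1 j : ℝ) + 2 * lam j)
      * Fseq n k hk lam i E (β.1 i) (upIdx n k hk β j) := by
    refine Finset.sum_congr rfl fun j hj => ?_
    rw [hupj j (Finset.mem_erase.1 hj).1]
  rw [hS, hupi]
  simp only [Fseq]
  rw [dif_pos hupi, hdown]
  field_simp
  rw [mul_div_cancel_left₀ _ (right_ne_zero_of_mul hne)]
  ring
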